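/- Let π ∈ S_r with permutation matrix w, let 2 ≤ j ≤ r−2 with (π(r), j) ∈ Inv(π⁻¹) (so n_{π(r),j} is a free variable), and let 1 ≤ d ≤ r with (π(d), j) ∈ Inv(π⁻¹). Then D_{↑,d}(n_{π(r),j}) = D(n_{π(d),j}) and D₁(n_{π(d),j}) = D₁(n_{π(r),j}) ∩ D_{↗,π(d)}(n_{π(r),j}). -/
import Mathlib


open Finset

/-- positions (row, column) in the matrix `wn`, 0-indexed -/
abbrev Pos (r : ℕ) := Fin r × Fin r

/-- the entry of `wn` at position `p` is nonzero: it is the `1` of its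
column (`p.2 = π p.1`) or a free variable. -/
abbrev IsNonzero {r : ℕ} (π : Equiv.Perm (Fin r)) (p : Pos r) : Prop :=
  p.2 = π p.1 ∨ (π p.1 < p.2 ∧ π.symm p.2 < p.1)

/-- the entry of `wn` at position `p` is a free variable, i.e.
`(π p.1, p.2) ∈ Inv (π⁻¹)` -/
abbrev IsFree {r : ℕ} (π : Equiv.Perm (Fin r)) (p : Pos r) : Prop :=
  π p.1 < p.2 ∧ π.symm p.2 < p.1

/-- a step of a path: move left or up to the neighboring nonzero entry -/
def Step {r : ℕ} (π : Equiv.Perm (Fin r)) (x y : Pos r) : Prop :=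
  (x.1 = y.1 ∧ y.2 < x.2 ∧ IsNonzero π y ∧
      ∀ c : Fin r, y.2 < c → c < x.2 → ¬ IsNonzero π (x.1, c)) ∨
  (x.2 = y.2 ∧ y.1 < x.1 ∧ IsNonzero π y ∧
      ∀ a : Fin r, y.1 < a → a < x.1 → ¬ IsNonzero π (a, x.2))

/-- a path: a nonempty list of nonzero entries, each step going up or left to
a neighboring nonzero entry.  The head is the origin, the last entry the
destination. -/
def IsPath {r : ℕ} (π : Equiv.Perm (Fin r)) (l : List (Pos r)) : Prop :=
  l ≠ [] ∧ (∀ x ∈ l, IsNonzero π x) ∧ l.Chain' (Step π)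

/-- `S` is a set of pairwise disjoint paths connecting `A` bijectively to `B`,
i.e. `S ∈ 𝒫(A → B)` -/
def Conn {r : ℕ} (π : Equiv.Perm (Fin r)) (A B : Finset (Pos r))
    (S : Finset (List (Pos r))) : Prop :=
  (∀ l ∈ S, IsPath π l) ∧
  (∀ l ∈ S, ∀ l' ∈ S, l ≠ l' → ∀ x ∈ l, x ∉ l') ∧
  (∀ a, a ∈ A ↔ ∃ l ∈ S, l.head? = some a) ∧
  (∀ b, b ∈ B ↔ ∃ l ∈ S, l.getLast? = some b)

/-- the monomial given by the product of the free variables traversed by a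
path, in `ℤ[{n_α}]` -/
noncomputable def uPath {r : ℕ} (π : Equiv.Perm (Fin r)) (l : List (Pos r)) :
    MvPolynomial (Pos r) ℤ :=
  ∏ x ∈ l.toFinset.filter (fun x => IsFree π x), MvPolynomial.X x

/-- `u(S)` for a set of disjoint paths `S` -/
noncomputable def uSet {r : ℕ} (π : Equiv.Perm (Fin r))
    (S : Finset (List (Pos r))) : MvPolynomial (Pos r) ℤ :=
  ∏ l ∈ S, uPath π l

/-- `P(A → B)`: sum of `u(S)` over all sets of disjoint paths connecting
`A` to `B` -/
noncomputable def Psum {r : ℕ} (π : Equiv.Perm (Fin r)) (A B : Finset (Pos r)) :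
    MvPolynomial (Pos r) ℤ :=
  ∑ᶠ S ∈ {S : Finset (List (Pos r)) | Conn π A B S}, uSet π S

/-- every positive-length path whose origin lies in the rightmost column
starts by going left -/
def StartsLeft (r : ℕ) (l : List (Pos r)) : Prop :=
  ∀ x ∈ l.head?, (x.2 : ℕ) = r - 1 → ∀ y ∈ l.tail.head?, y.1 = x.1

/-- `P_L(A → B)` -/
noncomputable def PLsum {r : ℕ} (π : Equiv.Perm (Fin r))
    (A B : Finset (Pos r)) : MvPolynomial (Pos r) ℤ :=
  ∑ᶠ S ∈ {S : Finset (List (Pos r)) | Conn π A B S ∧ ∀ l ∈ S, StartsLeft r l},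
    uSet π S

/-- the column of the rightmost nonzero entry of row `a` -/
def gammaCol {r : ℕ} (π : Equiv.Perm (Fin r)) (a : Fin r) : Fin r :=
  (Finset.univ.filter fun c => IsNonzero π (a, c)).max'
    ⟨π a, Finset.mem_filter.2 ⟨Finset.mem_univ _, Or.inl rfl⟩⟩

/-- `γ(row a)`: the rightmost nonzero entry of row `a`, as a position -/
def gammaPos {r : ℕ} (π : Equiv.Perm (Fin r)) (a : Fin r) : Pos r :=
  (a, gammaCol π a)

/-- `ρ(row a)`: the product of the nonzero entries (equivalently, of the free
variables) of row `a` -/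
noncomputable def rho {r : ℕ} (π : Equiv.Perm (Fin r)) (a : Fin r) :
    MvPolynomial (Pos r) ℤ :=
  ∏ c ∈ Finset.univ.filter (fun c => IsFree π (a, c)),
    MvPolynomial.X ((a, c) : Pos r)
/-- the last (rightmost column / bottom row) index -/
def lastIdx (r : ℕ) [NeZero r] : Fin r :=
  ⟨r - 1, by have := Nat.pos_of_ne_zero (NeZero.ne r); omega⟩

/-- rows of the submatrix `M_w(n_{π(d),j})` containing a `1`:
rows `a` with `π⁻¹(j) ≤ a ≤ d` whose `1` lies in column `≥ j` -/
def destRows {r : ℕ} (π : Equiv.Perm (Fin r)) (d j : Fin r) : Finset (Fin r) :=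
  Finset.univ.filter fun a => π.symm j ≤ a ∧ a ≤ d ∧ j ≤ π a

/-- `D(n_{π(d),j})`: the destinations of the free variable at position `(d,j)` -/
def Dest {r : ℕ} (π : Equiv.Perm (Fin r)) (d j : Fin r) : Finset (Pos r) :=
  (destRows π d j).image fun a => (a, π a)

/-- `O(n_{π(d),j})`: the origins — the rightmost nonzero entry of the bottom
row `d`, and the rightmost nonzero entries of the rows containing a
destination other than the top destination `1_j` -/
def Orig {r : ℕ} (π : Equiv.Perm (Fin r)) (d j : Fin r) : Finset (Pos r) :=
  insert (gammaPos π d) (((destRows π d j).erase (π.symm j)).image (gammaPos π))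

/-- `O₁(n_{π(d),j})`: origins in the rightmost column, above the bottom
origin, lying directly below a free variable which is not an origin -/
def O1 {r : ℕ} (π : Equiv.Perm (Fin r)) (d j : Fin r) : Finset (Pos r) :=
  (Orig π d j).filter fun x =>
    (x.2 : ℕ) = r - 1 ∧ x.1 < d ∧
      ∃ t : Fin r, (t : ℕ) + 1 = (x.1 : ℕ) ∧ IsFree π (t, x.2) ∧
        (t, x.2) ∉ Orig π d j

/-- `D₁(n_{π(d),j})`: destinations in the rows containing an element of `O₁` -/
def D1 {r : ℕ} (π : Equiv.Perm (Fin r)) (d j : Fin r) : Finset (Pos r) :=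
  (Dest π d j).filter fun y => ∃ x ∈ O1 π d j, x.1 = y.1

/-- `D_{↗,l}(n_{π(d),j})`: destinations equal to `1_l` or above and to the
right of `1_l` -/
def Dne {r : ℕ} (π : Equiv.Perm (Fin r)) (d j l : Fin r) : Finset (Pos r) :=
  (Dest π d j).filter fun y =>
    y = ((π.symm l, l) : Pos r) ∨ (y.1 < π.symm l ∧ l < y.2)
lemma le_lastIdx {r : ℕ} [NeZero r] (a : Fin r) : a ≤ lastIdx r := by
  have h := a.isLt
  simp only [Fin.le_def, lastIdx]
  omega

lemma mem_destRows_iff {r : ℕ} [NeZero r] (π : Equiv.Perm (Fin r)) (d j a : Fin r) :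
    a ∈ destRows π d j ↔ a ∈ destRows π (lastIdx r) j ∧ a ≤ d := by
  simp only [destRows, Finset.mem_filter, Finset.mem_univ, true_and]
  constructor
  · rintro ⟨h1, h2, h3⟩; exact ⟨⟨h1, le_lastIdx a, h3⟩, h2⟩
  · rintro ⟨⟨h1, _, h3⟩, h2⟩; exact ⟨h1, h2, h3⟩

lemma mem_Orig_iff {r : ℕ} [NeZero r] (π : Equiv.Perm (Fin r)) (d j : Fin r)
    (x : Pos r) (hx : x.1 < d) :
    x ∈ Orig π d j ↔ x ∈ Orig π (lastIdx r) j := by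
  have hd : d ≤ lastIdx r := le_lastIdx d
  simp only [Orig, Finset.mem_insert, Finset.mem_image, Finset.mem_erase]
  constructor
  · rintro (h | ⟨b, ⟨hb1, hb2⟩, hb3⟩)
    · exfalso; rw [h] at hx; exact lt_irrefl d hx
    · exact Or.inr ⟨b, ⟨hb1, ((mem_destRows_iff π d j b).1 hb2).1⟩, hb3⟩
  · rintro (h | ⟨b, ⟨hb1, hb2⟩, hb3⟩)
    · exfalso; rw [h] at hx; exact absurd hd (not_le.2 hx)
    · have hb : b = x.1 := by rw [← hb3]; rfl
      exact Or.inr ⟨b, ⟨hb1, (mem_destRows_iff π d j b).2 ⟨hb2, hb ▸ le_of_lt hx⟩⟩, hb3⟩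

lemma mem_O1_iff {r : ℕ} [NeZero r] (π : Equiv.Perm (Fin r)) (d j : Fin r)
    (x : Pos r) (hx : x.1 < d) :
    x ∈ O1 π d j ↔ x ∈ O1 π (lastIdx r) j := by
  have hd : d ≤ lastIdx r := le_lastIdx d
  simp only [O1, Finset.mem_filter]
  constructor
  · rintro ⟨ho, h1, _, t, ht1, ht2, ht3⟩
    have htx : ((t, x.2) : Pos r).1 < d :=
      lt_trans (show t < x.1 by rw [Fin.lt_def]; omega) hx
    exact ⟨(mem_Orig_iff π d j x hx).1 ho, h1, lt_of_lt_of_le hx hd,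
      t, ht1, ht2, fun h => ht3 ((mem_Orig_iff π d j _ htx).2 h)⟩
  · rintro ⟨ho, h1, _, t, ht1, ht2, ht3⟩
    have htx : ((t, x.2) : Pos r).1 < d :=
      lt_trans (show t < x.1 by rw [Fin.lt_def]; omega) hx
    exact ⟨(mem_Orig_iff π d j x hx).2 ho, h1, hx,
      t, ht1, ht2, fun h => ht3 ((mem_Orig_iff π d j _ htx).1 h)⟩

/-- For `2 ≤ j ≤ r−2` (1-indexed) with `n_{π(r),j}` free and any `d` with
`n_{π(d),j}` free, the destinations of `n_{π(r),j}` in or above row `d` are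
exactly the destinations of `n_{π(d),j}`, and
`D₁(n_{π(d),j}) = D₁(n_{π(r),j}) ∩ D_{↗,π(d)}(n_{π(r),j})`. -/
theorem Dest_up_and_D1_inter {r : ℕ} [NeZero r] (π : Equiv.Perm (Fin r))
    (j d : Fin r) (hj1 : 1 ≤ (j : ℕ)) (hj2 : (j : ℕ) ≤ r - 3)
    (hfr : IsFree π (lastIdx r, j)) (hfd : IsFree π (d, j)) :
    (Dest π (lastIdx r) j).filter (fun y => (y.1 : ℕ) ≤ (d : ℕ)) = Dest π d j ∧
    D1 π d j = D1 π (lastIdx r) j ∩ Dne π (lastIdx r) j (π d) := by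
  constructor
  · ext y
    simp only [Finset.mem_filter, Dest, Finset.mem_image]
    constructor
    · rintro ⟨⟨a, ha, rfl⟩, h2⟩
      exact ⟨a, (mem_destRows_iff π d j a).2 ⟨ha, Fin.le_def.2 h2⟩, rfl⟩
    · rintro ⟨a, ha, rfl⟩
      obtain ⟨ha1, ha2⟩ := (mem_destRows_iff π d j a).1 ha
      exact ⟨⟨a, ha1, rfl⟩, Fin.le_def.1 ha2⟩
  · ext y
    simp only [D1, Dne, Dest, Finset.mem_inter, Finset.mem_filter,
      Finset.mem_image, Equiv.symm_apply_apply]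
    constructor
    · rintro ⟨⟨a, ha, rfl⟩, x, hx, hxy⟩
      have hx1 : x.1 < d := ((Finset.mem_filter.1 hx).2).2.1
      obtain ⟨ha1, -⟩ := (mem_destRows_iff π d j a).1 ha
      have hja : j ≤ π a := ((Finset.mem_filter.1 ha1).2).2.2
      have hxa : x.1 = a := hxy
      refine ⟨⟨⟨a, ha1, rfl⟩, x, (mem_O1_iff π d j x hx1).1 hx, hxy⟩,
        ⟨a, ha1, rfl⟩, Or.inr ⟨?_, lt_of_lt_of_le hfd.1 hja⟩⟩
      exact hxa ▸ hx1
    · rintro ⟨⟨⟨a, ha1, rfl⟩, x, hx, hxy⟩, -, hne⟩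
      have hja : j ≤ π a := ((Finset.mem_filter.1 ha1).2).2.2
      have had : a < d := by
        rcases hne with h | h
        · exfalso
          have : π a = π d := congrArg Prod.snd h
          exact absurd (lt_of_lt_of_le hfd.1 hja) (this ▸ lt_irrefl (π a))
        · exact h.1
      have hx1 : x.1 < d := by
        have hxa : x.1 = a := hxy
        exact hxa ▸ had
      exact ⟨⟨a, (mem_destRows_iff π d j a).2 ⟨ha1, le_of_lt had⟩, rfl⟩,
        x, (mem_O1_iff π d j x hx1).2 hx, hxy⟩
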